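/- For all integers n ≥ 1, the Rogers constant satisfies σ_n ≤ (e/(4n))^{n/2} · (n+1)! / Γ(1 + n/2). -/

import Mathlib

open MeasureTheory Real

/-- The Rogers ratio `vol(T)/vol(S)` for a given choice of vertices `V` of a regular
`n`-simplex of edge length 2; when the `V i` are pairwise at distance 2 this is the
Rogers constant `σ_n`. -/
noncomputable def rogersRatio {n : ℕ} (V : Fin (n + 1) → EuclideanSpace ℝ (Fin n)) : ℝ :=
  (volume ((convexHull ℝ (Set.range V)) ∩ ⋃ i, Metric.closedBall (V i) 1)).toReal /
    (volume (convexHull ℝ (Set.range V))).toReal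

section Aux
open Stirling

lemma sqrtpi_le_stirlingSeq (k : ℕ) : √π ≤ stirlingSeq (k + 1) :=
  stirlingSeq'_antitone.le_of_tendsto
    (tendsto_stirlingSeq_sqrt_pi.comp (Filter.tendsto_add_atTop_nat 1)) k

lemma stirling_lower (k : ℕ) (hk : k ≠ 0) :
    √π * (√(2 * k) * ((k : ℝ) / exp 1) ^ k) ≤ (k.factorial : ℝ) := by
  obtain ⟨m, rfl⟩ := Nat.exists_eq_succ_of_ne_zero hk
  have h := sqrtpi_le_stirlingSeq m
  rw [stirlingSeq] at h
  have hpos : 0 < √(2 * ((m : ℝ) + 1)) * (((m : ℝ) + 1) / exp 1) ^ (m + 1) := by positivity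
  rw [le_div_iff₀ (by push_cast at hpos ⊢; convert hpos using 3)] at h
  simp only [Nat.succ_eq_add_one] at *
  push_cast at h ⊢
  linarith

lemma stirling_upper (k : ℕ) (hk : k ≠ 0) :
    (k.factorial : ℝ) ≤ (exp 1 / √2) * (√(2 * k) * ((k : ℝ) / exp 1) ^ k) := by
  obtain ⟨m, rfl⟩ := Nat.exists_eq_succ_of_ne_zero hk
  simp only [Nat.succ_eq_add_one] at *
  have h : stirlingSeq (m + 1) ≤ stirlingSeq (0 + 1) := stirlingSeq'_antitone (Nat.zero_le m)
  rw [stirlingSeq, stirlingSeq_one] at h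
  have hpos : 0 < √(2 * ((m + 1 : ℕ) : ℝ)) * (((m + 1 : ℕ) : ℝ) / exp 1) ^ (m + 1) := by
    positivity
  rw [div_le_iff₀ hpos] at h
  exact h

lemma e_le_two_sqrt_pi : exp 1 ≤ 2 * √π := by
  nlinarith [sq_sqrt pi_pos.le, sqrt_nonneg π, pi_gt_three, exp_one_lt_d9]

lemma core_even (k : ℕ) (hk : k ≠ 0) :
    4 ^ k * ((k : ℝ) / exp 1) ^ k * k.factorial ≤ ((2 * k).factorial : ℝ) := by
  have h1 := stirling_upper k hk
  have h2 := stirling_lower (2 * k) (by omega)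
  set B : ℝ := ((k : ℝ) / exp 1) ^ k with hB
  have hBnn : 0 ≤ B := by positivity
  have hs4 : √(2 * ((2 * k : ℕ) : ℝ)) = 2 * √k := by
    push_cast
    rw [show (2 : ℝ) * (2 * k) = 2 ^ 2 * k by ring, Real.sqrt_mul (by positivity),
      Real.sqrt_sq (by norm_num)]
  have hs2 : √(2 * (k : ℝ)) = √2 * √k := Real.sqrt_mul (by norm_num) _
  have hpow : (((2 * k : ℕ) : ℝ) / exp 1) ^ (2 * k) = 4 ^ k * B ^ 2 := by
    push_cast
    rw [pow_mul, show ((2 : ℝ) * k / exp 1) ^ 2 = 4 * ((k : ℝ) / exp 1) ^ 2 by ring,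
      mul_pow, hB, ← pow_mul, ← pow_mul, mul_comm 2 k]
  rw [hs4, hpow] at h2
  rw [hs2] at h1
  have h1' : (k.factorial : ℝ) ≤ exp 1 * √k * B := by
    have : exp 1 / √2 * (√2 * √k * B) = exp 1 * √k * B := by
      field_simp
    linarith [h1, this.symm.le]
  have hcast : 0 ≤ √k := sqrt_nonneg _
  calc (4:ℝ) ^ k * B * k.factorial ≤ 4 ^ k * B * (exp 1 * √k * B) := by
        have h4 : (0:ℝ) ≤ 4 ^ k * B := by positivity
        exact mul_le_mul_of_nonneg_left h1' h4
    _ ≤ 4 ^ k * B * (2 * √π * √k * B) := by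
        have : exp 1 * √k * B ≤ 2 * √π * √k * B := by
          have := mul_le_mul_of_nonneg_right
            (mul_le_mul_of_nonneg_right e_le_two_sqrt_pi hcast) hBnn
          linarith
        have h4 : (0:ℝ) ≤ 4 ^ k * B := by positivity
        exact mul_le_mul_of_nonneg_left this h4
    _ = √π * (2 * √k * (4 ^ k * B ^ 2)) := by ring
    _ ≤ ((2 * k).factorial : ℝ) := h2

lemma core_odd (k : ℕ) (hk : k ≠ 0) :
    π * (((2 * k + 1 : ℕ) : ℝ) / (2 * exp 1)) ^ (2 * k + 1) ≤ ((k.factorial : ℝ)) ^ 2 := by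
  have h1 := stirling_lower k hk
  set B : ℝ := ((k : ℝ) / exp 1) ^ k with hB
  have hknn : (1:ℝ) ≤ k := by exact_mod_cast Nat.one_le_iff_ne_zero.mpr hk
  have he : (0:ℝ) < exp 1 := exp_pos 1
  -- squared Stirling lower bound : π * (2k) * B^2 ≤ (k!)^2
  have hsq : π * (2 * k) * B ^ 2 ≤ ((k.factorial : ℝ)) ^ 2 := by
    have hnn : 0 ≤ √π * (√(2 * k) * B) := by positivity
    have := mul_self_le_mul_self hnn h1
    calc π * (2 * k) * B ^ 2 = (√π * (√(2 * k) * B)) * (√π * (√(2 * k) * B)) := by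
          rw [show (√π * (√(2 * ↑k) * B)) * (√π * (√(2 * ↑k) * B))
              = (√π * √π) * ((√(2*↑k) * √(2*↑k)) * (B*B)) by ring,
            Real.mul_self_sqrt pi_pos.le, Real.mul_self_sqrt (by positivity)]
          ring
      _ ≤ ((k.factorial : ℝ)) ^ 2 := by nlinarith [this]
  -- key : (2k+1)^(2k+1) ≤ 2 * exp 1 * (2k)^(2k+1)
  have hkey : ((2 * k + 1 : ℕ) : ℝ) ^ (2 * k + 1) ≤ 2 * exp 1 * ((2 * k : ℝ)) ^ (2 * k + 1) := by
    have hstep : ((2 * k + 1 : ℕ) : ℝ) ≤ (2 * k : ℝ) * exp (1 / (2 * k)) := by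
      have h := add_one_le_exp (1 / (2 * (k:ℝ)))
      have h2k : (0:ℝ) < 2 * k := by positivity
      push_cast
      calc (2 * (k:ℝ) + 1) = 2 * k * (1 / (2 * k) + 1) := by field_simp; ring
        _ ≤ 2 * k * exp (1 / (2 * k)) := by nlinarith [h]
    have hnn : (0:ℝ) ≤ ((2 * k + 1 : ℕ) : ℝ) := by positivity
    calc ((2 * k + 1 : ℕ) : ℝ) ^ (2 * k + 1)
        ≤ ((2 * k : ℝ) * exp (1 / (2 * k))) ^ (2 * k + 1) :=
          pow_le_pow_left₀ hnn hstep _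
      _ = (2 * k : ℝ) ^ (2 * k + 1) * exp (1 / (2 * k)) ^ (2 * k + 1) := mul_pow _ _ _
      _ = (2 * k : ℝ) ^ (2 * k + 1) * exp ((2 * k + 1) / (2 * k)) := by
          rw [← Real.exp_nat_mul]
          congr 1
          push_cast
          field_simp
      _ ≤ (2 * k : ℝ) ^ (2 * k + 1) * (2 * exp 1) := by
          have harg : ((2 * (k:ℝ) + 1)) / (2 * k) ≤ 3 / 2 := by
            rw [div_le_div_iff₀ (by positivity) (by norm_num)]
            nlinarith
          have : exp ((2 * (k:ℝ) + 1) / (2 * k)) ≤ 2 * exp 1 := by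
            calc exp ((2 * (k:ℝ) + 1) / (2 * k)) ≤ exp (3 / 2) := by
                  apply exp_le_exp.mpr
                  push_cast
                  exact harg
              _ ≤ 2 * exp 1 := by
                  have h32 : exp (3/2 : ℝ) = exp 1 * exp (1/2 : ℝ) := by
                    rw [← exp_add]; norm_num
                  have hsq2 : exp (1/2 : ℝ) * exp (1/2 : ℝ) = exp 1 := by
                    rw [← exp_add]; norm_num
                  have : exp (1/2 : ℝ) ≤ 2 := by
                    nlinarith [exp_pos (1/2 : ℝ), exp_one_lt_d9]
                  nlinarith [exp_pos 1, exp_pos (1/2 : ℝ)]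
          have hnn2 : (0:ℝ) ≤ ((2:ℝ) * k) ^ (2 * k + 1) := by positivity
          nlinarith [this, hnn2]
      _ = 2 * exp 1 * (2 * k : ℝ) ^ (2 * k + 1) := by ring
  -- combine
  have hBsq : B ^ 2 * (2 * exp 1) ^ (2 * k + 1) = (2 * (k:ℝ)) ^ (2 * k) * (2 * exp 1) := by
    rw [hB]
    field_simp
    simp only [← Real.exp_one_pow, ← pow_mul]
    have hX : rexp 1 ^ (k * 2) * (rexp 1)⁻¹ ^ (k * 2) = 1 := by
      rw [← mul_pow, mul_inv_cancel₀ he.ne', one_pow]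
    linear_combination (↑k ^ (k * 2) * rexp 1 * 2 ^ (k * 2) * 2) * hX
  have hden : (0:ℝ) < (2 * exp 1) ^ (2 * k + 1) := by positivity
  rw [div_pow, ← mul_div_assoc, div_le_iff₀ hden]
  calc π * ((2 * k + 1 : ℕ):ℝ) ^ (2 * k + 1)
      ≤ π * (2 * exp 1 * (2 * (k:ℝ)) ^ (2 * k + 1)) :=
        mul_le_mul_of_nonneg_left hkey pi_pos.le
    _ = (π * (2 * k) * ((2 * (k:ℝ)) ^ (2 * k) * (2 * exp 1))) := by ring
    _ = π * (2 * k) * (B ^ 2 * (2 * exp 1) ^ (2 * k + 1)) := by rw [hBsq]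
    _ = (π * (2 * k) * B ^ 2) * (2 * exp 1) ^ (2 * k + 1) := by ring
    _ ≤ ((k.factorial : ℝ)) ^ 2 * (2 * exp 1) ^ (2 * k + 1) :=
        mul_le_mul_of_nonneg_right hsq hden.le

lemma keyG (n : ℕ) (hn : 1 ≤ n) :
    π * ((n : ℝ) / (2 * exp 1)) ^ n ≤ Real.Gamma (((n : ℝ) + 1) / 2) ^ 2 := by
  rcases Nat.even_or_odd n with ⟨k, hke⟩ | ⟨k, hko⟩
  · -- n = 2k, k ≥ 1 ; write k = m + 1
    have hk : k ≠ 0 := by omega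
    obtain ⟨m, rfl⟩ := Nat.exists_eq_succ_of_ne_zero hk
    subst hke
    simp only [Nat.succ_eq_add_one]
    have hdup := Real.Gamma_mul_Gamma_add_half ((m : ℝ) + 1)
    rw [Real.Gamma_nat_eq_factorial m] at hdup
    have hexp : ((2 : ℝ)) ^ ((1 : ℝ) - 2 * ((m : ℝ) + 1)) = ((2 : ℝ) ^ (2 * m + 1))⁻¹ := by
      rw [show (1 : ℝ) - 2 * ((m : ℝ) + 1) = -((2 * m + 1 : ℕ) : ℝ) by push_cast; ring,
        Real.rpow_neg (by norm_num), Real.rpow_natCast]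
    rw [hexp] at hdup
    have h2m : (2 : ℝ) * ((m : ℝ) + 1) = ((2 * m + 1 : ℕ) : ℝ) + 1 := by push_cast; ring
    rw [h2m, Real.Gamma_nat_eq_factorial (2 * m + 1)] at hdup
    have harg : (((m + 1 + (m + 1) : ℕ) : ℝ) + 1) / 2 = (m : ℝ) + 1 + 1 / 2 := by
      push_cast; ring
    rw [harg]
    set G := Real.Gamma ((m : ℝ) + 1 + 1 / 2) with hGdef
    have hGpos : 0 < G := Real.Gamma_pos_of_pos (by positivity)
    set y : ℝ := (((m : ℝ) + 1) / exp 1) ^ (m + 1) with hy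
    have hynn : 0 ≤ y := by positivity
    -- hYX : y * m! * 2^(2m+1) ≤ (2m+1)!
    have hYX : y * m.factorial * 2 ^ (2 * m + 1) ≤ ((2 * m + 1).factorial : ℝ) := by
      have hce := core_even (m + 1) (by omega)
      have hfac : ((2 * (m + 1)).factorial : ℝ)
          = (2 * (m : ℝ) + 2) * ((2 * m + 1).factorial : ℝ) := by
        rw [show 2 * (m + 1) = (2 * m + 1) + 1 by ring, Nat.factorial_succ]
        push_cast; ring
      have hfac2 : ((m + 1).factorial : ℝ) = ((m : ℝ) + 1) * m.factorial := by
        rw [Nat.factorial_succ]; push_cast; ring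
      rw [hfac, hfac2] at hce
      have h4 : (4 : ℝ) ^ (m + 1) = 2 * 2 ^ (2 * m + 1) := by
        rw [show (4 : ℝ) = 2 ^ 2 by norm_num, ← pow_mul]
        rw [show 2 * (m + 1) = (2 * m + 1) + 1 by ring, pow_succ]
        ring
      rw [h4] at hce
      have hmpos : (0 : ℝ) < 2 * ((m : ℝ) + 1) := by positivity
      rw [← mul_le_mul_iff_of_pos_right hmpos]
      push_cast at hce ⊢
      nlinarith [hce]
    -- key : √π * y ≤ G
    have hkeyG : √π * y ≤ G := by
      have hmf : (0 : ℝ) < (m.factorial : ℝ) := by positivity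
      rw [← mul_le_mul_iff_of_pos_left hmf]
      calc (m.factorial : ℝ) * (√π * y)
          = (y * m.factorial * 2 ^ (2 * m + 1)) * ((2 ^ (2 * m + 1) : ℝ))⁻¹ * √π := by
            field_simp
        _ ≤ ((2 * m + 1).factorial : ℝ) * ((2 ^ (2 * m + 1) : ℝ))⁻¹ * √π := by
            have : (0:ℝ) ≤ ((2 ^ (2 * m + 1) : ℝ))⁻¹ * √π := by positivity
            nlinarith [hYX, this]
        _ = (m.factorial : ℝ) * G := hdup.symm
    have hbase : ((m + 1 + (m + 1) : ℕ) : ℝ) / (2 * exp 1) = ((m : ℝ) + 1) / exp 1 := by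
      have := (exp_pos 1).ne'
      push_cast
      field_simp
      ring
    rw [hbase]
    have hpow : (((m : ℝ) + 1) / exp 1) ^ (m + 1 + (m + 1)) = y ^ 2 := by
      rw [hy, ← pow_mul]
      congr 1
      ring
    rw [hpow]
    calc π * y ^ 2 = (√π * y) ^ 2 := by
          rw [mul_pow, Real.sq_sqrt pi_pos.le]
      _ ≤ G ^ 2 := by
          apply pow_le_pow_left₀ (by positivity) hkeyG
  · -- n = 2k + 1
    subst hko
    have harg : (((2 * k + 1 : ℕ) : ℝ) + 1) / 2 = (k : ℝ) + 1 := by push_cast; ring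
    rw [harg, Real.Gamma_nat_eq_factorial k]
    rcases Nat.eq_zero_or_pos k with rfl | hk
    · -- n = 1 : π / (2e) ≤ 1
      simp only [Nat.factorial_zero]
      norm_num
      nlinarith [exp_one_gt_d9, pi_lt_d2, exp_pos 1, pi_pos,
        mul_inv_cancel₀ (exp_pos 1).ne', inv_pos.mpr (exp_pos 1)]
    · exact core_odd k (by omega)

lemma analytic (n : ℕ) (hn : 1 ≤ n) :
    ((√2)⁻¹) ^ n * Real.Gamma (1 + (n : ℝ) / 2) ≤
      (exp 1 / (4 * n)) ^ ((n : ℝ) / 2) * n.factorial := by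
  have hnR : (1 : ℝ) ≤ n := by exact_mod_cast hn
  have hG : 0 < Real.Gamma (1 + (n : ℝ) / 2) := Real.Gamma_pos_of_pos (by positivity)
  have hΓ₂ : 0 < Real.Gamma (((n : ℝ) + 1) / 2) := Real.Gamma_pos_of_pos (by positivity)
  set G := Real.Gamma (1 + (n : ℝ) / 2)
  set Γ₂ := Real.Gamma (((n : ℝ) + 1) / 2)
  have hdup := Real.Gamma_mul_Gamma_add_half (((n : ℝ) + 1) / 2)
  rw [show ((n : ℝ) + 1) / 2 + 1 / 2 = 1 + (n : ℝ) / 2 by ring,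
    show (2 : ℝ) * (((n : ℝ) + 1) / 2) = (n : ℝ) + 1 by ring,
    Real.Gamma_nat_eq_factorial n,
    show (1 : ℝ) - ((n : ℝ) + 1) = -(n : ℝ) by ring,
    Real.rpow_neg (by norm_num), Real.rpow_natCast] at hdup
  -- hdup : Γ₂ * G = n! * (2^n)⁻¹ * √π
  have hkey := keyG n hn
  have hsq : ((n : ℝ) / (2 * exp 1)) ^ n * G ^ 2 ≤ (n.factorial : ℝ) ^ 2 * ((4 : ℝ) ^ n)⁻¹ := by
    have h1 : π * ((n : ℝ) / (2 * exp 1)) ^ n * G ^ 2 ≤ Γ₂ ^ 2 * G ^ 2 :=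
      mul_le_mul_of_nonneg_right hkey (by positivity)
    have h2 : Γ₂ ^ 2 * G ^ 2 = (n.factorial : ℝ) ^ 2 * ((4 : ℝ) ^ n)⁻¹ * π := by
      have : Γ₂ ^ 2 * G ^ 2 = (Γ₂ * G) ^ 2 := by ring
      rw [this, hdup]
      rw [mul_pow, mul_pow, Real.sq_sqrt pi_pos.le, ← inv_pow, ← pow_mul,
        show n * 2 = 2 * n by ring, pow_mul]
      norm_num [inv_pow]
      rw [one_div, inv_pow]
      exact Or.inl rfl
    nlinarith [pi_pos, h1, h2]
  have key2 : (((√2)⁻¹) ^ n * G) ^ 2 ≤ ((exp 1 / (4 * n)) ^ ((n : ℝ) / 2) * n.factorial) ^ 2 := by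
    have e1 : (((√2)⁻¹ : ℝ) ^ n) ^ 2 = ((2 : ℝ)⁻¹) ^ n := by
      rw [← pow_mul, show n * 2 = 2 * n by ring, pow_mul, inv_pow, Real.sq_sqrt (by norm_num)]
    have e2 : ((exp 1 / (4 * n)) ^ ((n : ℝ) / 2)) ^ 2
        = (exp 1 / (4 * (n : ℝ))) ^ n := by
      rw [← Real.rpow_natCast ((exp 1 / (4 * (n:ℝ))) ^ ((n : ℝ) / 2)) 2,
        ← Real.rpow_mul (by positivity)]
      norm_num
    rw [mul_pow, mul_pow, e1, e2]
    -- goal : (2⁻¹)^n * G^2 ≤ (e/(4n))^n * (n!)^2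
    have iden : ((2 : ℝ)⁻¹) ^ n
        = (exp 1 / (4 * (n : ℝ))) ^ n * (4 : ℝ) ^ n * ((n : ℝ) / (2 * exp 1)) ^ n := by
      rw [← mul_pow, ← mul_pow]
      congr 1
      field_simp
    calc ((2 : ℝ)⁻¹) ^ n * G ^ 2
        = (exp 1 / (4 * (n : ℝ))) ^ n * (4 : ℝ) ^ n * (((n : ℝ) / (2 * exp 1)) ^ n * G ^ 2) := by
          rw [iden]; ring
      _ ≤ (exp 1 / (4 * (n : ℝ))) ^ n * (4 : ℝ) ^ n
            * ((n.factorial : ℝ) ^ 2 * ((4 : ℝ) ^ n)⁻¹) := by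
          apply mul_le_mul_of_nonneg_left hsq (by positivity)
      _ = (exp 1 / (4 * (n : ℝ))) ^ n * (n.factorial : ℝ) ^ 2 := by
          field_simp
  have hL : (0 : ℝ) ≤ ((√2)⁻¹) ^ n * G := by positivity
  have hR : (0 : ℝ) ≤ (exp 1 / (4 * n)) ^ ((n : ℝ) / 2) * n.factorial := by positivity
  nlinarith [key2, hL, hR]

variable {n : ℕ}

lemma exists_weights (V : Fin (n + 1) → EuclideanSpace ℝ (Fin n)) {x : EuclideanSpace ℝ (Fin n)}
    (hx : x ∈ convexHull ℝ (Set.range V)) :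
    ∃ w : Fin (n + 1) → ℝ, (∀ j, 0 ≤ w j) ∧ ∑ j, w j = 1 ∧ ∑ j, w j • V j = x := by
  rw [convexHull_range_eq_exists_affineCombination] at hx
  obtain ⟨s, w, hw0, hw1, hxc⟩ := hx
  refine ⟨fun j => if j ∈ s then w j else 0, fun j => ?_, ?_, ?_⟩
  · by_cases h : j ∈ s <;> simp [h]
    exact hw0 j h
  · rw [Finset.sum_ite_mem, Finset.univ_inter, hw1]
  · rw [← hxc, Finset.affineCombination_eq_linear_combination s V w hw1]
    rw [← Finset.sum_subset (Finset.subset_univ s) (fun j _ hj => by simp [hj])]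
    exact Finset.sum_congr rfl fun j hj => by simp [hj]

lemma geo_subset (V : Fin (n + 1) → EuclideanSpace ℝ (Fin n))
    (hV : ∀ i j, i ≠ j → dist (V i) (V j) = 2) (i : Fin (n + 1)) :
    convexHull ℝ (Set.range V) ∩ Metric.closedBall (V i) 1 ⊆
      AffineMap.homothety (V i) ((√2)⁻¹ : ℝ) '' convexHull ℝ (Set.range V) := by
  rintro x ⟨hx, hxb⟩
  obtain ⟨w, hw0, hw1, hwx⟩ := exists_weights V hx
  have hsqrt2 : (0:ℝ) < √2 := Real.sqrt_pos.mpr (by norm_num)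
  have h22 : (√2 : ℝ) * √2 = 2 := Real.mul_self_sqrt (by norm_num)
  -- norm expansion
  have hxV : x - V i = ∑ j, w j • (V j - V i) := by
    simp only [smul_sub]
    rw [Finset.sum_sub_distrib, hwx, ← Finset.sum_smul, hw1, one_smul]
  have hnorm1 : ‖x - V i‖ ^ 2 ≤ 1 := by
    have := Metric.mem_closedBall.mp hxb
    rw [dist_eq_norm] at this
    nlinarith [norm_nonneg (x - V i)]
  have hexp : ‖x - V i‖ ^ 2
      = ∑ j, ∑ k, (w j * w k) * (inner ℝ (V j - V i) (V k - V i) : ℝ) := by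
    rw [hxV, ← real_inner_self_eq_norm_sq]
    rw [sum_inner]
    refine Finset.sum_congr rfl fun j _ => ?_
    rw [real_inner_smul_left, inner_sum, Finset.mul_sum]
    refine Finset.sum_congr rfl fun k _ => ?_
    rw [real_inner_smul_right]
    ring
  -- inner products
  have hdist : ∀ j k : Fin (n + 1), j ≠ k → ‖V j - V k‖ = 2 := fun j k h => by
    rw [← dist_eq_norm]; exact hV j k h
  have hinner2 : ∀ j k : Fin (n + 1), j ≠ i → k ≠ i → j ≠ k →
      (inner ℝ (V j - V i) (V k - V i) : ℝ) = 2 := by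
    intro j k hj hk hjk
    have hn : ‖(V j - V i) - (V k - V i)‖ = 2 := by
      rw [show (V j - V i) - (V k - V i) = V j - V k by abel]
      exact hdist j k hjk
    have := norm_sub_sq_real (V j - V i) (V k - V i)
    rw [hn, hdist j i hj, hdist k i hk] at this
    nlinarith [this]
  have hinner4 : ∀ j : Fin (n + 1), j ≠ i →
      (inner ℝ (V j - V i) (V j - V i) : ℝ) = 4 := by
    intro j hj
    rw [real_inner_self_eq_norm_sq, hdist j i hj]
    norm_num
  -- lower bound by 2 * (1 - w i)^2
  set g : Fin (n + 1) → ℝ := fun j => if j = i then 0 else w j with hg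
  have hterm : ∀ j k : Fin (n + 1),
      2 * g j * g k ≤ (w j * w k) * (inner ℝ (V j - V i) (V k - V i) : ℝ) := by
    intro j k
    by_cases hj : j = i
    · subst hj
      simp [hg, sub_self, inner_zero_left]
    by_cases hk : k = i
    · subst hk
      simp [hg, sub_self, inner_zero_right]
    by_cases hjk : j = k
    · subst hjk
      rw [hinner4 j hj]
      simp only [hg, if_neg hj]
      nlinarith [hw0 j]
    · rw [hinner2 j k hj hk hjk]
      simp only [hg, if_neg hj, if_neg hk]
      ring_nf
      exact le_rfl
  have hgsum : ∑ j, g j = 1 - w i := by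
    have : ∀ j, g j = w j - (if j = i then w j else 0) := by
      intro j; by_cases h : j = i <;> simp [hg, h]
    rw [Finset.sum_congr rfl fun j _ => this j, Finset.sum_sub_distrib, hw1,
      Finset.sum_ite_eq' Finset.univ i w]
    simp
  have hlow : 2 * (1 - w i) ^ 2 ≤ ‖x - V i‖ ^ 2 := by
    rw [hexp]
    calc 2 * (1 - w i) ^ 2 = ∑ j, ∑ k, 2 * g j * g k := by
          rw [← hgsum]
          rw [Finset.sum_comm]
          simp only [← Finset.sum_mul, ← Finset.mul_sum]
          ring
      _ ≤ _ := Finset.sum_le_sum fun j _ => Finset.sum_le_sum fun k _ => hterm j k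
  have hwile : w i ≤ 1 := by
    have := Finset.single_le_sum (f := w) (fun j _ => hw0 j) (Finset.mem_univ i)
    linarith [hw1 ▸ this]
  have hwnn : 0 ≤ 1 - w i := by linarith
  have hs2 : (1 - w i) * √2 ≤ 1 := by
    have hX : ((1 - w i) * √2) ^ 2 = 2 * (1 - w i) ^ 2 := by
      rw [mul_pow, Real.sq_sqrt (by norm_num : (0:ℝ) ≤ 2)]
      ring
    nlinarith [sq_nonneg ((1 - w i) * √2 - 1), hX, hlow, hnorm1]
  refine ⟨√2 • x + (1 - √2) • V i, ?_, ?_⟩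
  · set w' : Fin (n + 1) → ℝ := fun j => √2 * w j + (if j = i then 1 - √2 else 0) with hw'
    have hsum' : ∑ j, w' j = 1 := by
      simp only [hw', Finset.sum_add_distrib, ← Finset.mul_sum, hw1,
        Finset.sum_ite_eq' Finset.univ i]
      simp
    have hcomb : ∑ j, w' j • V j = √2 • x + (1 - √2) • V i := by
      simp only [hw', add_smul, Finset.sum_add_distrib]
      congr 1
      · rw [← hwx, Finset.smul_sum]
        exact Finset.sum_congr rfl fun j _ => (smul_smul _ _ _).symm
      · simp only [ite_smul, zero_smul, Finset.sum_ite_eq', Finset.mem_univ, if_true]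
    rw [← hcomb]
    refine Convex.sum_mem (convex_convexHull ℝ _) (fun j _ => ?_) hsum'
      (fun j _ => subset_convexHull ℝ _ (Set.mem_range_self j))
    by_cases h : j = i
    · subst h
      simp only [hw', if_pos rfl, if_true]
      linarith [hs2]
    · simp only [hw', if_neg h, add_zero]
      exact mul_nonneg hsqrt2.le (hw0 j)
  · rw [AffineMap.homothety_apply]
    simp only [vsub_eq_sub, vadd_eq_add]
    match_scalars
    all_goals field_simp
    all_goals ring


lemma ratio_bound (V : Fin (n + 1) → EuclideanSpace ℝ (Fin n))
    (hV : ∀ i j, i ≠ j → dist (V i) (V j) = 2) :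
    rogersRatio V ≤ (n + 1) * ((√2)⁻¹ : ℝ) ^ n := by
  set S := convexHull ℝ (Set.range V) with hS
  have htnn : (0:ℝ) ≤ ((√2)⁻¹ : ℝ) ^ n := by positivity
  have hcompact : IsCompact S := (Set.finite_range V).isCompact_convexHull ℝ
  have hSfin : volume S < ⊤ := hcompact.measure_lt_top
  have hle : volume (S ∩ ⋃ i, Metric.closedBall (V i) 1)
      ≤ ((n + 1 : ℕ) : ENNReal) * (ENNReal.ofReal (((√2)⁻¹ : ℝ) ^ n) * volume S) := by
    rw [Set.inter_iUnion]
    refine le_trans (measure_iUnion_le _) ?_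
    have hone : ∀ i, volume (S ∩ Metric.closedBall (V i) 1)
        ≤ ENNReal.ofReal (((√2)⁻¹ : ℝ) ^ n) * volume S := by
      intro i
      refine le_trans (measure_mono (geo_subset V hV i)) ?_
      rw [Measure.addHaar_image_homothety]
      apply le_of_eq
      congr 1
      rw [finrank_euclideanSpace_fin, abs_of_nonneg htnn]
    calc ∑' i : Fin (n + 1), volume (S ∩ Metric.closedBall (V i) 1)
        ≤ ∑' _i : Fin (n + 1), ENNReal.ofReal (((√2)⁻¹ : ℝ) ^ n) * volume S :=
          ENNReal.tsum_le_tsum hone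
      _ = ((n + 1 : ℕ) : ENNReal) * (ENNReal.ofReal (((√2)⁻¹ : ℝ) ^ n) * volume S) := by
          rw [tsum_fintype]
          simp [Finset.sum_const, Finset.card_univ]
  have hTfin : volume (S ∩ ⋃ i, Metric.closedBall (V i) 1) ≠ ⊤ :=
    (lt_of_le_of_lt (measure_mono Set.inter_subset_left) hSfin).ne
  have hR : (volume (S ∩ ⋃ i, Metric.closedBall (V i) 1)).toReal
      ≤ (n + 1 : ℝ) * ((√2)⁻¹ : ℝ) ^ n * (volume S).toReal := by
    calc (volume (S ∩ ⋃ i, Metric.closedBall (V i) 1)).toReal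
        ≤ (((n + 1 : ℕ) : ENNReal) * (ENNReal.ofReal (((√2)⁻¹ : ℝ) ^ n) * volume S)).toReal := by
          apply ENNReal.toReal_mono _ hle
          exact ENNReal.mul_ne_top (ENNReal.natCast_ne_top _)
            (ENNReal.mul_ne_top ENNReal.ofReal_ne_top hSfin.ne)
      _ = (n + 1 : ℝ) * ((√2)⁻¹ : ℝ) ^ n * (volume S).toReal := by
          rw [ENNReal.toReal_mul, ENNReal.toReal_mul, ENNReal.toReal_natCast,
            ENNReal.toReal_ofReal htnn]
          push_cast
          ring
  rw [rogersRatio]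
  rcases eq_or_lt_of_le (ENNReal.toReal_nonneg (a := volume S)) with h0 | hpos
  · have : (volume (S ∩ ⋃ i, Metric.closedBall (V i) 1)).toReal = 0 := by
      have := hR
      rw [← h0] at this
      nlinarith [ENNReal.toReal_nonneg (a := volume (S ∩ ⋃ i, Metric.closedBall (V i) 1))]
    rw [← hS, this, zero_div]
    positivity
  · rw [← hS, div_le_iff₀ hpos]
    exact hR

end Aux

/-- For all `n ≥ 1`, the Rogers constant satisfies
`σ_n ≤ (e/(4n))^{n/2} · (n+1)! / Γ(1 + n/2)`. -/
theorem rogersConstant_upper_bound (n : ℕ) (hn : 1 ≤ n)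
    (V : Fin (n + 1) → EuclideanSpace ℝ (Fin n))
    (hV : ∀ i j, i ≠ j → dist (V i) (V j) = 2) :
    rogersRatio V ≤ (Real.exp 1 / (4 * n)) ^ ((n : ℝ) / 2) * (Nat.factorial (n + 1)) /
      Real.Gamma (1 + (n : ℝ) / 2) := by
  have h1 := ratio_bound V hV
  have h2 := analytic n hn
  have hG : 0 < Real.Gamma (1 + (n : ℝ) / 2) := Real.Gamma_pos_of_pos (by positivity)
  refine le_trans h1 ?_
  rw [le_div_iff₀ hG]
  have hfac : ((n + 1).factorial : ℝ) = ((n : ℝ) + 1) * n.factorial := by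
    rw [Nat.factorial_succ]; push_cast; ring
  rw [hfac]
  have := mul_le_mul_of_nonneg_left h2 (show (0:ℝ) ≤ (n : ℝ) + 1 by positivity)
  push_cast
  nlinarith [this]
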